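/- Let f : ℚ → ℚ be the affine map f(x) = x + c with c > 0, and let S ⊆ ℚ be the smallest set containing a finite set F of closed intervals with rational endpoints and closed under I ⊆ S → f(I) ⊆ S. Then there exists T ∈ ℚ and a finite set of intervals P all contained in [T, T + c) such that for all t ≥ T: t ∈ S iff (t mod c relative to T) lies in the projection of P, i.e., S ∩ [T, ∞) = ⋃_{k∈ℕ} (P + k·c). In particular S ∩ [T, ∞) is c-periodic. -/

import Mathlib

open Set

private lemma spec_eq (c : ℚ) (n : ℕ) (a b : Fin n → ℚ) (S : Set ℚ)
    (hS : S = ⋂₀ {X : Set ℚ | (∀ i, Icc (a i) (b i) ⊆ X) ∧ ∀ t ∈ X, t + c ∈ X}) :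
    S = {x : ℚ | ∃ i, ∃ k : ℕ, x - k * c ∈ Icc (a i) (b i)} := by
  subst hS
  apply Set.Subset.antisymm
  · apply sInter_subset_of_mem
    constructor
    · intro i x hx
      exact ⟨i, 0, by simpa using hx⟩
    · rintro t ⟨i, k, hk⟩
      refine ⟨i, k + 1, ?_⟩
      have h : t + c - ((k : ℚ) + 1) * c = t - k * c := by ring
      push_cast
      rw [h]
      exact hk
  · rintro x ⟨i, k, hk⟩ X ⟨h1, h2⟩
    have key : ∀ (j : ℕ) (y : ℚ), y ∈ Icc (a i) (b i) → y + j * c ∈ X := by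
      intro j
      induction j with
      | zero => intro y hy; simpa using h1 i hy
      | succ j ih =>
          intro y hy
          have := h2 _ (ih y hy)
          have h : y + (j : ℚ) * c + c = y + ((j : ℚ) + 1) * c := by ring
          rw [h] at this
          push_cast
          exact this
    have := key k (x - k * c) hk
    simpa using this

private lemma forward_mem (c : ℚ) (S : Set ℚ) (hf : ∀ t ∈ S, t + c ∈ S) :
    ∀ (k : ℕ) (x : ℚ), x ∈ S → x + k * c ∈ S := by
  intro k
  induction k with
  | zero => intro x hx; simpa using hx
  | succ k ih =>
      intro x hx
      have := hf _ (ih x hx)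
      have h : x + (k : ℚ) * c + c = x + ((k : ℚ) + 1) * c := by ring
      rw [h] at this
      push_cast
      exact this

private lemma backward_mem (c T : ℚ) (hc : 0 < c) (S : Set ℚ)
    (hb : ∀ t, T ≤ t → t + c ∈ S → t ∈ S) :
    ∀ (k : ℕ) (x : ℚ), x ∈ S → T ≤ x - k * c → x - k * c ∈ S := by
  intro k
  induction k with
  | zero => intro x hx _; simpa using hx
  | succ k ih =>
      intro x hx h
      push_cast at h
      have h1 : T ≤ x - (k : ℚ) * c := by nlinarith
      have h2 := ih x hx h1
      have h3 : x - ((k : ℚ) + 1) * c + c = x - (k : ℚ) * c := by ring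
      have := hb (x - ((k : ℚ) + 1) * c) (by linarith) (by rw [h3]; exact h2)
      push_cast
      exact this

private lemma master (c T : ℚ) (hc : 0 < c) (S : Set ℚ)
    (hf : ∀ t ∈ S, t + c ∈ S)
    (hb : ∀ t, T ≤ t → t + c ∈ S → t ∈ S) :
    S ∩ Ici T = ⋃ k : ℕ, (fun x => x + (k : ℚ) * c) '' (S ∩ Ico T (T + c)) := by
  ext x
  simp only [mem_inter_iff, mem_Ici, mem_iUnion, mem_image, mem_Ico]
  constructor
  · rintro ⟨hxS, hxT⟩
    have hk0 : (0 : ℤ) ≤ ⌊(x - T) / c⌋ := Int.floor_nonneg.2 (div_nonneg (by linarith) hc.le)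
    set k : ℤ := ⌊(x - T) / c⌋ with hkdef
    have h1 : (k : ℚ) ≤ (x - T) / c := Int.floor_le _
    have h2 : (x - T) / c < (k : ℚ) + 1 := Int.lt_floor_add_one _
    have h1' : (k : ℚ) * c ≤ x - T := by rw [le_div_iff₀ hc] at h1; linarith
    have h2' : x - T < ((k : ℚ) + 1) * c := by rw [div_lt_iff₀ hc] at h2; linarith
    have hcast : ((k.toNat : ℕ) : ℚ) = (k : ℚ) := by
      rw [← Int.cast_natCast, Int.toNat_of_nonneg hk0]
    have hTle : T ≤ x - (k.toNat : ℚ) * c := by rw [hcast]; linarith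
    refine ⟨k.toNat, x - (k.toNat : ℚ) * c,
      ⟨⟨backward_mem c T hc S hb k.toNat x hxS hTle, hTle, ?_⟩, by ring⟩⟩
    rw [hcast]; linarith
  · rintro ⟨k, y, ⟨⟨hyS, hyT, _⟩, rfl⟩⟩
    have hnn : (0 : ℚ) ≤ (k : ℚ) * c := by positivity
    exact ⟨forward_mem c S hf k y hyS, by linarith⟩

private lemma piece_ex (c T A B : ℚ) (hc : 0 < c) (hBT : B < T) :
    ∃ (u1 v1 : ℚ) (o1 : Bool) (u2 v2 : ℚ),
      (if o1 then Ico u1 v1 else Icc u1 v1) ⊆ Ico T (T + c) ∧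
      Icc u2 v2 ⊆ Ico T (T + c) ∧
      {x : ℚ | ∃ k : ℕ, x - k * c ∈ Icc A B} ∩ Ico T (T + c) =
        (if o1 then Ico u1 v1 else Icc u1 v1) ∪ Icc u2 v2 := by
  by_cases hAB : A ≤ B
  · set K : ℤ := ⌈(T - A) / c⌉ with hKdef
    have hK1 : (1 : ℤ) ≤ K := by
      have h0 : (0 : ℚ) < (T - A) / c := div_pos (by linarith) hc
      have := Int.ceil_pos.2 h0
      omega
    have hK1' : (1 : ℚ) ≤ (K : ℚ) := by exact_mod_cast hK1
    have haT : T ≤ A + (K : ℚ) * c := by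
      have h1 : (T - A) / c ≤ (K : ℚ) := Int.le_ceil _
      rw [div_le_iff₀ hc] at h1
      linarith
    have hac : A + (K : ℚ) * c < T + c := by
      have h1 : (K : ℚ) < (T - A) / c + 1 := Int.ceil_lt_add_one _
      have h2 : (K : ℚ) - 1 < (T - A) / c := by linarith
      rw [lt_div_iff₀ hc] at h2
      nlinarith
    -- cast lemmas
    have hcastK : ((K.toNat : ℕ) : ℚ) = (K : ℚ) := by
      rw [← Int.cast_natCast, Int.toNat_of_nonneg (by omega)]
    have hcastK1 : (((K - 1).toNat : ℕ) : ℚ) = (K : ℚ) - 1 := by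
      rw [← Int.cast_natCast, Int.toNat_of_nonneg (by omega)]
      push_cast
      ring
    by_cases hwb : T + c ≤ (B + (K : ℚ) * c)
    · refine ⟨(A + (K : ℚ) * c), T + c, true, T, min ((B + (K : ℚ) * c) - c) (A + (K : ℚ) * c), ?_, ?_, ?_⟩
      · simp only [ite_true]
        exact Ico_subset_Ico haT le_rfl
      · rintro x ⟨h1, h2⟩
        exact ⟨h1, lt_of_le_of_lt (h2.trans (min_le_right _ _)) hac⟩
      · simp only [ite_true]
        ext x
        simp only [mem_inter_iff, mem_setOf_eq, mem_Ico, mem_union, mem_Icc, mem_Ico,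
          le_min_iff]
        constructor
        · rintro ⟨⟨k, hk1, hk2⟩, hxT, hxTc⟩
          rcases lt_trichotomy ((k : ℤ)) K with hlt | heq | hgt
          · -- k ≤ K - 1
            have hkq : (k : ℚ) ≤ (K : ℚ) - 1 := by
              have : (k : ℤ) ≤ K - 1 := by omega
              exact_mod_cast this
            have hx2 : x ≤ (B + (K : ℚ) * c) - c := by nlinarith
            by_cases hxa : x ≤ (A + (K : ℚ) * c)
            · exact Or.inr ⟨hxT, hx2, hxa⟩
            · exact Or.inl ⟨le_of_not_ge hxa, hxTc⟩
          · have hkq : (k : ℚ) = (K : ℚ) := by exact_mod_cast heq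
            rw [hkq] at hk1
            exact Or.inl ⟨by linarith, hxTc⟩
          · have hkq : (K : ℚ) + 1 ≤ (k : ℚ) := by
              have : K + 1 ≤ (k : ℤ) := by omega
              exact_mod_cast this
            exfalso
            nlinarith
        · rintro (⟨h1, h2⟩ | ⟨h1, h2, h3⟩)
          · refine ⟨⟨K.toNat, ?_⟩, haT.trans h1, h2⟩
            simp only [mem_Icc, hcastK]
            constructor
            · linarith
            · linarith
          · refine ⟨⟨(K - 1).toNat, ?_⟩, h1, lt_of_le_of_lt h3 hac⟩
            simp only [mem_Icc, hcastK1]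
            constructor
            · have : (A + (K : ℚ) * c) - c < T := by linarith
              nlinarith
            · nlinarith
    · refine ⟨(A + (K : ℚ) * c), (B + (K : ℚ) * c), false, T, min ((B + (K : ℚ) * c) - c) (A + (K : ℚ) * c), ?_, ?_, ?_⟩
      · simp only [Bool.false_eq_true, ite_false]
        rintro x ⟨h1, h2⟩
        exact ⟨haT.trans h1, by linarith⟩
      · rintro x ⟨h1, h2⟩
        exact ⟨h1, lt_of_le_of_lt (h2.trans (min_le_right _ _)) hac⟩
      · simp only [Bool.false_eq_true, ite_false]
        ext x
        simp only [mem_inter_iff, mem_setOf_eq, mem_Ico, mem_union, mem_Icc, le_min_iff]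
        constructor
        · rintro ⟨⟨k, hk1, hk2⟩, hxT, hxTc⟩
          rcases lt_trichotomy ((k : ℤ)) K with hlt | heq | hgt
          · exfalso
            have hkq : (k : ℚ) ≤ (K : ℚ) - 1 := by
              have : (k : ℤ) ≤ K - 1 := by omega
              exact_mod_cast this
            have hx2 : x ≤ (B + (K : ℚ) * c) - c := by nlinarith
            linarith
          · have hkq : (k : ℚ) = (K : ℚ) := by exact_mod_cast heq
            rw [hkq] at hk1 hk2
            exact Or.inl ⟨by linarith, by linarith⟩
          · have hkq : (K : ℚ) + 1 ≤ (k : ℚ) := by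
              have : K + 1 ≤ (k : ℤ) := by omega
              exact_mod_cast this
            exfalso
            nlinarith
        · rintro (⟨h1, h2⟩ | ⟨h1, h2, h3⟩)
          · refine ⟨⟨K.toNat, ?_⟩, haT.trans h1, by linarith⟩
            simp only [mem_Icc, hcastK]
            constructor
            · linarith
            · linarith
          · exfalso; linarith
  · refine ⟨T + 1, T, false, T + 1, T, ?_, ?_, ?_⟩
    · simp only [Bool.false_eq_true, ite_false]
      rw [Icc_eq_empty (by linarith)]
      exact empty_subset _
    · rw [Icc_eq_empty (by linarith)]
      exact empty_subset _
    · simp only [Bool.false_eq_true, ite_false]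
      rw [Icc_eq_empty (show ¬ A ≤ B from hAB),
        Icc_eq_empty (show ¬ (T + 1 : ℚ) ≤ T by linarith)]
      simp
/-- Pattern detection (Algorithm 2): the minimal model of a punctual-shift program
(closure of finitely many intervals under `x ↦ x + c`) agrees, past some `T`, with a
finite pattern `P ⊆ [T, T+c)` of intervals repeated with period `c`. -/
theorem stmt_15 (c : ℚ) (hc : 0 < c) (n : ℕ) (a b : Fin n → ℚ)
    (S : Set ℚ)
    (hS : S = ⋂₀ {X : Set ℚ | (∀ i, Icc (a i) (b i) ⊆ X) ∧ ∀ t ∈ X, t + c ∈ X}) :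
    ∃ T : ℚ, ∃ (m : ℕ) (u v : Fin m → ℚ) (o : Fin m → Bool),
      (∀ i, (if o i then Ico (u i) (v i) else Icc (u i) (v i)) ⊆ Ico T (T + c)) ∧
      (S ∩ Ici T =
        ⋃ k : ℕ, ⋃ i,
          (fun x => x + (k : ℚ) * c) '' (if o i then Ico (u i) (v i) else Icc (u i) (v i))) ∧
      (∀ t : ℚ, T ≤ t → (t ∈ S ↔ t + c ∈ S)) := by
  have hSpec := spec_eq c n a b S hS
  set T : ℚ := 1 + ∑ j, |b j| with hTdef
  have hbT : ∀ j, b j < T := by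
    intro j
    have h1 : b j ≤ |b j| := le_abs_self _
    have h2 : |b j| ≤ ∑ i, |b i| :=
      Finset.single_le_sum (f := fun i => |b i|) (fun i _ => abs_nonneg _) (Finset.mem_univ j)
    rw [hTdef]; linarith
  have hf : ∀ t ∈ S, t + c ∈ S := by
    rw [hSpec]
    rintro t ⟨i, k, hk⟩
    refine ⟨i, k + 1, ?_⟩
    have h : t + c - ((k : ℚ) + 1) * c = t - k * c := by ring
    push_cast
    rw [h]
    exact hk
  have hb : ∀ t, T ≤ t → t + c ∈ S → t ∈ S := by
    rw [hSpec]
    rintro t hTt ⟨i, k, hk⟩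
    cases k with
    | zero =>
        exfalso
        simp only [Nat.cast_zero, zero_mul, sub_zero, mem_Icc] at hk
        have := hbT i
        linarith [hk.2]
    | succ k =>
        refine ⟨i, k, ?_⟩
        have h : t + c - ((k : ℚ) + 1) * c = t - k * c := by ring
        push_cast at hk
        rw [h] at hk
        exact hk
  have hper : ∀ t : ℚ, T ≤ t → (t ∈ S ↔ t + c ∈ S) :=
    fun t ht => ⟨fun h => hf t h, fun h => hb t ht h⟩
  choose u1 v1 o1 u2 v2 hp1 hp2 hEq using fun j => piece_ex c T (a j) (b j) hc (hbT j)
  refine ⟨T, n + n, Sum.elim u1 u2 ∘ finSumFinEquiv.symm,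
    Sum.elim v1 v2 ∘ finSumFinEquiv.symm,
    Sum.elim o1 (fun _ => false) ∘ finSumFinEquiv.symm, ?_, ?_, hper⟩
  · intro i
    simp only [Function.comp_apply]
    rcases finSumFinEquiv.symm i with j | j
    · exact hp1 j
    · simpa using hp2 j
  · have hwin : S ∩ Ico T (T + c) =
        ⋃ i : Fin (n + n),
          (if (Sum.elim o1 (fun _ => false) ∘ finSumFinEquiv.symm) i then
            Ico ((Sum.elim u1 u2 ∘ finSumFinEquiv.symm) i)
              ((Sum.elim v1 v2 ∘ finSumFinEquiv.symm) i)
          else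
            Icc ((Sum.elim u1 u2 ∘ finSumFinEquiv.symm) i)
              ((Sum.elim v1 v2 ∘ finSumFinEquiv.symm) i)) := by
      have hA : S ∩ Ico T (T + c) =
          ⋃ j : Fin n, ({x : ℚ | ∃ k : ℕ, x - k * c ∈ Icc (a j) (b j)} ∩ Ico T (T + c)) := by
        rw [hSpec]
        ext x
        simp only [mem_inter_iff, mem_setOf_eq, mem_iUnion]
        tauto
      rw [hA]
      have hB : ∀ j : Fin n,
          {x : ℚ | ∃ k : ℕ, x - k * c ∈ Icc (a j) (b j)} ∩ Ico T (T + c) =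
            (if o1 j then Ico (u1 j) (v1 j) else Icc (u1 j) (v1 j)) ∪ Icc (u2 j) (v2 j) :=
        hEq
      calc ⋃ j : Fin n, ({x : ℚ | ∃ k : ℕ, x - k * c ∈ Icc (a j) (b j)} ∩ Ico T (T + c))
          = ⋃ j : Fin n,
            ((if o1 j then Ico (u1 j) (v1 j) else Icc (u1 j) (v1 j)) ∪ Icc (u2 j) (v2 j)) :=
            iUnion_congr hB
        _ = (⋃ j : Fin n, (if o1 j then Ico (u1 j) (v1 j) else Icc (u1 j) (v1 j))) ∪
            ⋃ j : Fin n, Icc (u2 j) (v2 j) := iUnion_union_distrib _ _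
        _ = _ := by
            rw [show (⋃ i : Fin (n + n),
                (if (Sum.elim o1 (fun _ => false) ∘ finSumFinEquiv.symm) i then
                  Ico ((Sum.elim u1 u2 ∘ finSumFinEquiv.symm) i)
                    ((Sum.elim v1 v2 ∘ finSumFinEquiv.symm) i)
                else
                  Icc ((Sum.elim u1 u2 ∘ finSumFinEquiv.symm) i)
                    ((Sum.elim v1 v2 ∘ finSumFinEquiv.symm) i))) =
              ⋃ s : Fin n ⊕ Fin n,
                (if (Sum.elim o1 (fun _ => false) ∘ finSumFinEquiv.symm) (finSumFinEquiv s) then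
                  Ico ((Sum.elim u1 u2 ∘ finSumFinEquiv.symm) (finSumFinEquiv s))
                    ((Sum.elim v1 v2 ∘ finSumFinEquiv.symm) (finSumFinEquiv s))
                else
                  Icc ((Sum.elim u1 u2 ∘ finSumFinEquiv.symm) (finSumFinEquiv s))
                    ((Sum.elim v1 v2 ∘ finSumFinEquiv.symm) (finSumFinEquiv s)))
              from (iUnion_congr_of_surjective _ finSumFinEquiv.surjective
                (fun s => rfl)).symm]
            rw [iUnion_sum]
            simp only [Function.comp_apply, Equiv.symm_apply_apply, Sum.elim_inl,
              Sum.elim_inr, Bool.false_eq_true, if_false]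
    rw [master c T hc S hf hb, hwin]
    simp only [image_iUnion]
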